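/- Let X be an integrable real random variable with continuous strictly increasing CDF F, and let δ ∈ (0,1). Then sup_{τ ∈ ℝ} (τ - (1/δ)·E[max(τ - X, 0)]) = (1/δ) · ∫₀^δ F⁻¹(η) dη. -/

import Mathlib

open MeasureTheory intervalIntegral

theorem cvar_eq_tail_average_of_quantiles {Ω : Type*} [MeasurableSpace Ω]
    (μ : Measure Ω) [IsProbabilityMeasure μ]
    (X : Ω → ℝ) (hX : Integrable X μ)
    (F : ℝ → ℝ) (hF : ∀ t : ℝ, F t = (μ {ω | X ω ≤ t}).toReal)
    (hFcont : Continuous F) (hFmono : StrictMono F)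
    (Finv : ℝ → ℝ) (hFinv : ∀ p ∈ Set.Ioo (0:ℝ) 1, F (Finv p) = p)
    (δ : ℝ) (hδ : δ ∈ Set.Ioo (0:ℝ) 1) :
    (⨆ τ : ℝ, (τ - (1 / δ) * ∫ ω, max (τ - X ω) 0 ∂μ)) =
      (1 / δ) * ∫ η in (0:ℝ)..δ, Finv η := by
  obtain ⟨hδ0, hδ1⟩ := hδ
  have hXm : AEMeasurable X μ := hX.aemeasurable
  -- basic bounds on F
  have hFnonneg : ∀ t, 0 ≤ F t := fun t => (hF t) ▸ ENNReal.toReal_nonneg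
  have hFle1 : ∀ t, F t ≤ 1 := by
    intro t
    rw [hF t]
    have h1 : μ {ω | X ω ≤ t} ≤ 1 := prob_le_one
    calc (μ {ω | X ω ≤ t}).toReal ≤ (1 : ENNReal).toReal :=
          ENNReal.toReal_mono (by norm_num) h1
      _ = 1 := by simp
  have hFpos : ∀ t, 0 < F t := fun t =>
    lt_of_le_of_lt (hFnonneg (t - 1)) (hFmono (by linarith))
  have hFlt1 : ∀ t, F t < 1 := fun t =>
    lt_of_lt_of_le (hFmono (show t < t + 1 by linarith)) (hFle1 (t + 1))
  -- pushforward measure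
  set ν : Measure ℝ := Measure.map X μ with hν
  haveI : IsProbabilityMeasure ν := Measure.isProbabilityMeasure_map hXm
  have hνIic : ∀ t, ν (Set.Iic t) = ENNReal.ofReal (F t) := by
    intro t
    rw [hν, Measure.map_apply_of_aemeasurable hXm measurableSet_Iic]
    have : X ⁻¹' Set.Iic t = {ω | X ω ≤ t} := rfl
    rw [this, hF t, ENNReal.ofReal_toReal (measure_ne_top μ _)]
  have hνIicReal : ∀ t, (ν (Set.Iic t)).toReal = F t := by
    intro t
    rw [hνIic t, ENNReal.toReal_ofReal (hFnonneg t)]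
  -- integrability of id on ν
  have hid : Integrable (fun x : ℝ => x) ν := by
    rw [hν]
    exact (integrable_map_measure aestronglyMeasurable_id hXm).2 hX
  -- convert expectation to ν
  have hconv : ∀ τ : ℝ, ∫ ω, max (τ - X ω) 0 ∂μ = ∫ x, max (τ - x) 0 ∂ν := by
    intro τ
    have hm : Measurable fun x : ℝ => max (τ - x) 0 :=
      (measurable_const.sub measurable_id').max measurable_const
    rw [hν]
    exact (integral_map hXm hm.aestronglyMeasurable).symm
  -- notation
  set τs : ℝ := Finv δ with hτs
  have hFτs : F τs = δ := hFinv δ ⟨hδ0, hδ1⟩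
  set S : Set ℝ := Set.Iic τs with hS
  have hφint : Integrable (S.indicator fun x => x) ν := hid.indicator measurableSet_Iic
  set Iφ : ℝ := ∫ x, S.indicator (fun x => x) x ∂ν with hIφ
  have hmaxint : ∀ τ : ℝ, Integrable (fun x => max (τ - x) 0) ν := fun τ =>
    ((integrable_const τ).sub hid).pos_part
  have hindint : ∀ τ : ℝ, Integrable (S.indicator fun x => τ - x) ν := fun τ =>
    ((integrable_const τ).sub hid).indicator measurableSet_Iic
  -- integral of the indicator of (τ - x)
  have hindval : ∀ τ : ℝ, ∫ x, S.indicator (fun x => τ - x) x ∂ν = τ * δ - Iφ := by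
    intro τ
    have heq : (S.indicator fun x => τ - x) =
        fun x => S.indicator (fun _ => τ) x - S.indicator (fun x => x) x := by
      funext x
      by_cases hx : x ∈ S <;> simp [Set.indicator_apply, hx]
    rw [heq, integral_sub ((integrable_const τ).indicator measurableSet_Iic) hφint,
      integral_indicator_const τ measurableSet_Iic]
    have : ν.real (Set.Iic τs) = δ := by rw [measureReal_def, hνIicReal, hFτs]
    rw [this, hIφ, smul_eq_mul]
    ring
  -- pointwise inequality and equality at τs
  have hptle : ∀ τ x : ℝ, S.indicator (fun x => τ - x) x ≤ max (τ - x) 0 := by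
    intro τ x
    by_cases hx : x ∈ S
    · rw [Set.indicator_of_mem hx]; exact le_max_left _ _
    · rw [Set.indicator_of_notMem hx]; exact le_max_right _ _
  have hpteq : ∀ x : ℝ, max (τs - x) 0 = S.indicator (fun x => τs - x) x := by
    intro x
    by_cases hx : x ∈ S
    · rw [Set.indicator_of_mem hx]
      have hx' : x ≤ τs := hx
      exact max_eq_left (by linarith)
    · rw [Set.indicator_of_notMem hx]
      have hx' : τs < x := not_le.mp (fun h => hx (Set.mem_Iic.mpr h))
      exact max_eq_right (by linarith)
  -- upper bound
  have hub : ∀ τ : ℝ, τ - (1 / δ) * ∫ ω, max (τ - X ω) 0 ∂μ ≤ (1 / δ) * Iφ := by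
    intro τ
    rw [hconv τ]
    have h1 : τ * δ - Iφ ≤ ∫ x, max (τ - x) 0 ∂ν := by
      rw [← hindval τ]
      exact integral_mono (hindint τ) (hmaxint τ) (hptle τ)
    have h2 : (1 / δ) * (τ * δ - Iφ) ≤ (1 / δ) * ∫ x, max (τ - x) 0 ∂ν :=
      mul_le_mul_of_nonneg_left h1 (by positivity)
    have h3 : (1 / δ) * (τ * δ - Iφ) = τ - (1 / δ) * Iφ := by field_simp
    linarith
  -- value at τs
  have hvs : τs - (1 / δ) * ∫ ω, max (τs - X ω) 0 ∂μ = (1 / δ) * Iφ := by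
    rw [hconv τs]
    have : ∫ x, max (τs - x) 0 ∂ν = τs * δ - Iφ := by
      rw [← hindval τs]
      exact MeasureTheory.integral_congr_ae (Filter.Eventually.of_forall hpteq)
    rw [this]
    field_simp
    ring
  -- the supremum
  have hsup : (⨆ τ : ℝ, (τ - (1 / δ) * ∫ ω, max (τ - X ω) 0 ∂μ)) = (1 / δ) * Iφ := by
    apply le_antisymm
    · exact ciSup_le hub
    · have hbdd : BddAbove (Set.range fun τ : ℝ => τ - (1 / δ) * ∫ ω, max (τ - X ω) 0 ∂μ) := by
        refine ⟨(1 / δ) * Iφ, ?_⟩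
        rintro _ ⟨τ, rfl⟩
        exact hub τ
      calc (1 / δ) * Iφ = τs - (1 / δ) * ∫ ω, max (τs - X ω) 0 ∂μ := hvs.symm
        _ ≤ _ := le_ciSup hbdd τs
  rw [hsup]
  -- now the quantile integral
  congr 1
  -- Finv is a.e. measurable on the restriction to (0,1)
  set lam : Measure ℝ := volume.restrict (Set.Ioo (0:ℝ) 1) with hlam
  have hkey : ∀ t : ℝ, Set.Ioo (0:ℝ) 1 ∩ Finv ⁻¹' (Set.Iic t) = Set.Ioc 0 (F t) := by
    intro t
    ext u
    simp only [Set.mem_inter_iff, Set.mem_Ioo, Set.mem_preimage, Set.mem_Iic, Set.mem_Ioc]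
    constructor
    · rintro ⟨⟨hu0, hu1⟩, hut⟩
      refine ⟨hu0, ?_⟩
      have := hFinv u ⟨hu0, hu1⟩
      calc u = F (Finv u) := this.symm
        _ ≤ F t := hFmono.monotone hut
    · rintro ⟨hu0, hut⟩
      have hu1 : u < 1 := lt_of_le_of_lt hut (hFlt1 t)
      refine ⟨⟨hu0, hu1⟩, ?_⟩
      have hFF := hFinv u ⟨hu0, hu1⟩
      have : F (Finv u) ≤ F t := by rw [hFF]; exact hut
      exact hFmono.le_iff_le.mp this
  have hFinv' : Measurable ((Set.Ioo (0:ℝ) 1).indicator Finv) := by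
    apply measurable_of_Iic
    intro t
    have : (Set.Ioo (0:ℝ) 1).indicator Finv ⁻¹' Set.Iic t =
        (Set.Ioo (0:ℝ) 1 ∩ Finv ⁻¹' (Set.Iic t)) ∪
          ((Set.Ioo (0:ℝ) 1)ᶜ ∩ {u | (0:ℝ) ≤ t}) := by
      ext u
      by_cases hu : u ∈ Set.Ioo (0:ℝ) 1 <;>
        simp [Set.indicator_apply, hu, Set.mem_preimage]
    rw [this, hkey t]
    apply (measurableSet_Ioc).union
    by_cases ht : (0:ℝ) ≤ t
    · simp only [ht, Set.setOf_true, Set.inter_univ]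
      exact measurableSet_Ioo.compl
    · simp only [ht, Set.setOf_false, Set.inter_empty]
      exact MeasurableSet.empty
  have hFinvae : AEMeasurable Finv lam :=
    ⟨(Set.Ioo (0:ℝ) 1).indicator Finv, hFinv',
      ((indicator_ae_eq_restrict measurableSet_Ioo).symm : _)⟩
  haveI : IsProbabilityMeasure lam := by
    constructor
    rw [hlam, Measure.restrict_apply_univ, Real.volume_Ioo]
    norm_num
  set m1 : Measure ℝ := Measure.map Finv lam with hm1def
  haveI : IsProbabilityMeasure m1 := Measure.isProbabilityMeasure_map hFinvae
  have hm1 : m1 = ν := by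
    apply MeasureTheory.Measure.ext_of_Iic m1 ν
    intro t
    rw [hm1def, Measure.map_apply_of_aemeasurable hFinvae measurableSet_Iic,
      hlam, Measure.restrict_apply' measurableSet_Ioo, Set.inter_comm, hkey t,
      Real.volume_Ioc, hνIic t]
    norm_num
  -- compute Iφ via m1
  have hφmeas : Measurable (S.indicator fun x : ℝ => x) :=
    measurable_id.indicator measurableSet_Iic
  have step1 : Iφ = ∫ u, S.indicator (fun x => x) (Finv u) ∂lam := by
    rw [hIφ, ← hm1, hm1def,
      integral_map hFinvae hφmeas.aestronglyMeasurable]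
  have hcompeq : ∀ u ∈ Set.Ioo (0:ℝ) 1,
      S.indicator (fun x => x) (Finv u) = (Set.Iic δ).indicator Finv u := by
    intro u ⟨hu0, hu1⟩
    have hFF := hFinv u ⟨hu0, hu1⟩
    have hiff : Finv u ≤ τs ↔ u ≤ δ := by
      constructor
      · intro h
        calc u = F (Finv u) := hFF.symm
          _ ≤ F τs := hFmono.monotone h
          _ = δ := hFτs
      · intro h
        have : F (Finv u) ≤ F τs := by rw [hFF, hFτs]; exact h
        exact hFmono.le_iff_le.mp this
    by_cases h : u ≤ δ
    · have h1 : Finv u ∈ S := Set.mem_Iic.mpr (hiff.mpr h)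
      have h2 : u ∈ Set.Iic δ := Set.mem_Iic.mpr h
      rw [Set.indicator_of_mem h1, Set.indicator_of_mem h2]
    · have h1 : Finv u ∉ S := fun hc => h (hiff.mp hc)
      have h2 : u ∉ Set.Iic δ := fun hc => h hc
      rw [Set.indicator_of_notMem h1, Set.indicator_of_notMem h2]
  have step2 : ∫ u, S.indicator (fun x => x) (Finv u) ∂lam
      = ∫ u, (Set.Iic δ).indicator Finv u ∂lam := by
    apply MeasureTheory.integral_congr_ae
    rw [hlam]
    exact (ae_restrict_iff' measurableSet_Ioo).2 (Filter.Eventually.of_forall hcompeq)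
  have hIicIoo : Set.Iic δ ∩ Set.Ioo (0:ℝ) 1 = Set.Ioc 0 δ := by
    ext u
    simp only [Set.mem_inter_iff, Set.mem_Iic, Set.mem_Ioo, Set.mem_Ioc]
    constructor
    · rintro ⟨h1, h2, h3⟩; exact ⟨h2, h1⟩
    · rintro ⟨h1, h2⟩; exact ⟨h2, h1, lt_of_le_of_lt h2 hδ1⟩
  have step3 : ∫ u, (Set.Iic δ).indicator Finv u ∂lam = ∫ u in Set.Ioc 0 δ, Finv u := by
    rw [hlam, MeasureTheory.integral_indicator measurableSet_Iic,
      Measure.restrict_restrict measurableSet_Iic, hIicIoo]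
  rw [integral_of_le hδ0.le, ← step3, ← step2, ← step1]
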